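/- The expected number of vertices of degree at most k in G ~ SBM(n, α log n / n, β log n / n), restricted to the event that both communities have size between n/2 − n^{3/4} and n/2 + n^{3/4}, is at most 2(k+1)²(γ log n / 2)^k · n^{1−(α+β)/2+o(1)}, where γ = max{α, β}. -/

import Mathlib

open MeasureTheory Finset

/-- `sbmLaw ℙ n p q σ X`: under `ℙ`, the labels `σ` and adjacency indicators `X` are
distributed as `SBM(n, p, q)`. -/
def sbmLaw {Ω : Type} [MeasurableSpace Ω] (ℙ : Measure Ω) (n : ℕ) (p q : ℝ)
    (σ : Ω → Fin n → Bool) (X : Ω → Fin n → Fin n → Bool) : Prop :=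
  ℙ {ω | (∀ i j, X ω i j = X ω j i) ∧ ∀ i, X ω i i = false} = 1 ∧
  ∀ (ℓ : Fin n → Bool) (e : Fin n → Fin n → Bool),
    (∀ i j, e i j = e j i) → (∀ i, e i i = false) →
    (ℙ {ω | σ ω = ℓ ∧ X ω = e}).toReal =
      (1 / 2 : ℝ) ^ n * ∏ i : Fin n, ∏ j : Fin n,
        (if i < j then
          (if e i j then (if ℓ i = ℓ j then p else q)
           else 1 - (if ℓ i = ℓ j then p else q))
         else 1)

/-- The balance event `H`: both communities have size in `[n/2 − n^{3/4}, n/2 + n^{3/4}]`. -/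
def balanced {Ω : Type} (n : ℕ) (σ : Ω → Fin n → Bool) : Set Ω :=
  {ω | ((n : ℝ) / 2 - (n : ℝ) ^ ((3 : ℝ) / 4)
          ≤ (Set.ncard {i : Fin n | σ ω i = true} : ℝ) ∧
        (Set.ncard {i : Fin n | σ ω i = true} : ℝ)
          ≤ (n : ℝ) / 2 + (n : ℝ) ^ ((3 : ℝ) / 4)) ∧
       ((n : ℝ) / 2 - (n : ℝ) ^ ((3 : ℝ) / 4)
          ≤ (Set.ncard {i : Fin n | σ ω i = false} : ℝ) ∧
        (Set.ncard {i : Fin n | σ ω i = false} : ℝ)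
          ≤ (n : ℝ) / 2 + (n : ℝ) ^ ((3 : ℝ) / 4))}

namespace S12

variable {n : ℕ}

/-! ### Symmetric edge configurations and the product weight -/

abbrev Pairs (n : ℕ) := {x : Fin n × Fin n // x.1 < x.2}

def goodE (n : ℕ) : Finset (Fin n → Fin n → Bool) :=
  Finset.univ.filter (fun e => (∀ i j, e i j = e j i) ∧ ∀ i, e i i = false)

def Φ (g : Pairs n → Bool) : Fin n → Fin n → Bool :=
  fun a b => if h : a < b then g ⟨(a,b), h⟩ else if h : b < a then g ⟨(b,a), h⟩ else false

lemma Φ_mem (g : Pairs n → Bool) : Φ g ∈ goodE n := by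
  simp only [goodE, mem_filter, mem_univ, true_and]
  constructor
  · intro i j
    rcases lt_trichotomy i j with h | h | h
    · simp [Φ, h, not_lt.mpr h.le, h.ne']
    · simp [Φ, h]
    · simp [Φ, h, not_lt.mpr h.le, h.ne']
  · intro i; simp [Φ]

lemma prod_pairs (h : Fin n → Fin n → ℝ) :
    (∏ i : Fin n, ∏ j : Fin n, (if i < j then h i j else 1))
      = ∏ y : Pairs n, h y.1.1 y.1.2 := by
  rw [← Finset.prod_product']
  rw [show (∏ x ∈ univ ×ˢ univ, if x.1 < x.2 then h x.1 x.2 else 1)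
        = ∏ x ∈ (univ ×ˢ univ).filter (fun x : Fin n × Fin n => x.1 < x.2), h x.1 x.2
      from (Finset.prod_filter _ _).symm]
  rw [Finset.prod_subtype ((univ ×ˢ univ).filter (fun x : Fin n × Fin n => x.1 < x.2))
      (p := fun x : Fin n × Fin n => x.1 < x.2) (by simp) (fun x => h x.1 x.2)]

lemma sum_goodE_eq (F : (Fin n → Fin n → Bool) → ℝ) :
    ∑ e ∈ goodE n, F e = ∑ g : Pairs n → Bool, F (Φ g) := by
  refine (Finset.sum_bij' (fun g _ => Φ g) (fun e _ => fun y => e y.1.1 y.1.2)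
    (fun g _ => Φ_mem g) (fun e he => mem_univ _) ?_ ?_ ?_).symm
  · intro g _
    funext y
    simp only [Φ]
    rw [dif_pos y.2]
  · intro e he
    simp only [goodE, mem_filter, mem_univ, true_and] at he
    funext a b
    rcases lt_trichotomy a b with h | h | h
    · simp [Φ, h]
    · subst h; simp [Φ, he.2 a]
    · simp [Φ, not_lt.mpr h.le, h, he.1 a b]
  · intro g _; rfl

/-- Marginalization over symmetric edge configurations. -/
lemma lemmaG (U : Fin n → Fin n → Bool → ℝ) :
    ∑ e ∈ goodE n, ∏ i : Fin n, ∏ j : Fin n, (if i < j then U i j (e i j) else 1)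
      = ∏ i : Fin n, ∏ j : Fin n, (if i < j then U i j true + U i j false else 1) := by
  rw [sum_goodE_eq]
  have h1 : ∀ g : Pairs n → Bool,
      (∏ i : Fin n, ∏ j : Fin n, (if i < j then U i j (Φ g i j) else 1))
        = ∏ y : Pairs n, U y.1.1 y.1.2 (g y) := by
    intro g
    rw [prod_pairs (fun i j => U i j (Φ g i j))]
    refine Finset.prod_congr rfl fun y _ => ?_
    congr 1
    simp only [Φ]
    rw [dif_pos y.2]
  simp only [h1]
  rw [prod_pairs (fun i j => U i j true + U i j false)]
  have := Finset.prod_univ_sum (fun _ : Pairs n => (univ : Finset Bool))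
    (f := fun y b => U y.1.1 y.1.2 b)
  rw [Fintype.piFinset_univ] at this
  rw [← this]
  exact Finset.prod_congr rfl fun y _ => (Fintype.sum_bool _)

def rr (p q : ℝ) (ℓ : Fin n → Bool) (i j : Fin n) : ℝ := if ℓ i = ℓ j then p else q

lemma rr_symm (p q : ℝ) (ℓ : Fin n → Bool) (i j : Fin n) : rr p q ℓ i j = rr p q ℓ j i := by
  simp only [rr, eq_comm]

def Ufun (p q : ℝ) (ℓ : Fin n → Bool) (i₀ : Fin n) (S : Finset (Fin n))
    (i j : Fin n) (b : Bool) : ℝ :=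
  (if i = i₀ ∨ j = i₀ then
    (if (b = true ↔ (if i = i₀ then j else i) ∈ S) then (1:ℝ) else 0) else 1) *
  (if b then rr p q ℓ i j else 1 - rr p q ℓ i j)

/-- Summing the SBM edge weight over symmetric configurations whose
neighborhood at `i₀` is exactly `S` gives a product of Bernoulli point masses. -/
lemma lemmaM (p q : ℝ) (ℓ : Fin n → Bool) (i₀ : Fin n) (S : Finset (Fin n)) :
    ∑ e ∈ goodE n, (if (∀ j, j ≠ i₀ → (e i₀ j = true ↔ j ∈ S)) then (1:ℝ) else 0) *
      (∏ i : Fin n, ∏ j : Fin n, (if i < j then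
        (if e i j then rr p q ℓ i j else 1 - rr p q ℓ i j) else 1))
    = ∏ j ∈ univ.erase i₀, (if j ∈ S then rr p q ℓ i₀ j else 1 - rr p q ℓ i₀ j) := by
  classical
  set v : Fin n → ℝ := fun j => if j ∈ S then rr p q ℓ i₀ j else 1 - rr p q ℓ i₀ j with hv
  have key : ∀ e ∈ goodE n,
      (if (∀ j, j ≠ i₀ → (e i₀ j = true ↔ j ∈ S)) then (1:ℝ) else 0) *
      (∏ i : Fin n, ∏ j : Fin n, (if i < j then
        (if e i j then rr p q ℓ i j else 1 - rr p q ℓ i j) else 1))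
      = ∏ i : Fin n, ∏ j : Fin n, (if i < j then Ufun p q ℓ i₀ S i j (e i j) else 1) := by
    intro e he
    simp only [goodE, mem_filter, mem_univ, true_and] at he
    by_cases hA : ∀ j, j ≠ i₀ → (e i₀ j = true ↔ j ∈ S)
    · rw [if_pos hA, one_mul]
      refine Finset.prod_congr rfl fun i _ => Finset.prod_congr rfl fun j _ => ?_
      by_cases hij : i < j
      · rw [if_pos hij, if_pos hij, Ufun]
        by_cases ht : i = i₀ ∨ j = i₀
        · have hχ : (e i j = true ↔ (if i = i₀ then j else i) ∈ S) := by
            rcases ht with h1 | h1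
            · subst h1; rw [if_pos rfl]; exact hA j hij.ne'
            · subst h1
              rw [if_neg hij.ne, he.1 i j]
              exact hA i hij.ne
          rw [if_pos ht, if_pos hχ, one_mul]
        · rw [if_neg ht, one_mul]
      · rw [if_neg hij, if_neg hij]
    · rw [if_neg hA, zero_mul]
      obtain ⟨j₀, h⟩ := not_forall.mp hA
      rw [Classical.not_imp] at h
      obtain ⟨hj₀, hbad⟩ := h
      rcases (Ne.lt_or_gt hj₀) with hlt | hlt
      · refine (Finset.prod_eq_zero (mem_univ j₀) ?_).symm
        refine Finset.prod_eq_zero (mem_univ i₀) ?_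
        rw [if_pos hlt, Ufun]
        have hne : ¬ (e j₀ i₀ = true ↔ (if j₀ = i₀ then i₀ else j₀) ∈ S) := by
          rw [if_neg hj₀, he.1 j₀ i₀]; exact hbad
        rw [if_pos (Or.inr rfl), if_neg hne, zero_mul]
      · refine (Finset.prod_eq_zero (mem_univ i₀) ?_).symm
        refine Finset.prod_eq_zero (mem_univ j₀) ?_
        rw [if_pos hlt, Ufun]
        have hne : ¬ (e i₀ j₀ = true ↔ (if i₀ = i₀ then j₀ else i₀) ∈ S) := by
          rw [if_pos rfl]; exact hbad
        rw [if_pos (Or.inl rfl), if_neg hne, zero_mul]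
  rw [Finset.sum_congr rfl key, lemmaG]
  have hsum : ∀ i j : Fin n, Ufun p q ℓ i₀ S i j true + Ufun p q ℓ i₀ S i j false
      = if i = i₀ ∨ j = i₀ then v (if i = i₀ then j else i) else 1 := by
    intro i j
    simp only [Ufun]
    by_cases ht : i = i₀ ∨ j = i₀
    · rw [if_pos ht, if_pos ht, if_pos ht, hv]
      have hrr : rr p q ℓ i j = rr p q ℓ i₀ (if i = i₀ then j else i) := by
        by_cases h1 : i = i₀
        · subst h1; rw [if_pos rfl]
        · have h2 : j = i₀ := ht.resolve_left h1
          subst h2; rw [if_neg h1, rr_symm]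
      by_cases hS : (if i = i₀ then j else i) ∈ S
      · simp [hS, hrr]
      · simp [hS, hrr]
    · simp only [if_neg ht, if_true, Bool.false_eq_true, if_false, one_mul]
      ring
  simp only [hsum]
  have c1 : ∀ j : Fin n, (if i₀ < j then
        (if i₀ = i₀ ∨ j = i₀ then v (if i₀ = i₀ then j else i₀) else 1) else 1)
      = if i₀ < j then v j else 1 := by
    intro j
    by_cases h : i₀ < j
    · rw [if_pos h, if_pos h, if_pos (Or.inl rfl), if_pos rfl]
    · rw [if_neg h, if_neg h]
  have c2 : ∀ i : Fin n, i ≠ i₀ → (∏ j : Fin n, (if i < j then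
        (if i = i₀ ∨ j = i₀ then v (if i = i₀ then j else i) else 1) else 1))
      = if i < i₀ then v i else 1 := by
    intro i hi
    rw [← Finset.mul_prod_erase univ _ (mem_univ i₀)]
    have h2 : ∀ j ∈ univ.erase i₀, (if i < j then
        (if i = i₀ ∨ j = i₀ then v (if i = i₀ then j else i) else 1) else 1) = 1 := by
      intro j hj
      rcases mem_erase.mp hj with ⟨hji₀, _⟩
      by_cases h : i < j
      · rw [if_pos h, if_neg (by push_neg; exact ⟨hi, hji₀⟩)]
      · rw [if_neg h]
    rw [Finset.prod_congr rfl h2, Finset.prod_const_one, mul_one]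
    by_cases h : i < i₀
    · rw [if_pos h, if_pos h, if_pos (Or.inr rfl), if_neg hi]
    · rw [if_neg h, if_neg h]
  rw [← Finset.mul_prod_erase univ _ (mem_univ i₀)]
  rw [Finset.prod_congr rfl (fun j _ => c1 j)]
  rw [Finset.prod_congr rfl (fun i hi => c2 i (mem_erase.mp hi).1)]
  rw [← Finset.prod_filter (fun j => i₀ < j) v, ← Finset.prod_filter (fun i => i < i₀) v]
  have e1 : univ.filter (fun j => i₀ < j) = (univ.erase i₀).filter (fun j => i₀ < j) := by
    ext j
    simp only [mem_filter, mem_erase, mem_univ, true_and, and_true]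
    exact ⟨fun h => ⟨h.ne', h⟩, fun h => h.2⟩
  have e2 : (univ.erase i₀).filter (fun i => i < i₀)
      = (univ.erase i₀).filter (fun j => ¬ i₀ < j) := by
    ext j
    simp only [mem_filter, mem_erase, mem_univ, true_and, and_true, not_lt]
    constructor
    · rintro ⟨h1, h2⟩; exact ⟨h1, h2.le⟩
    · rintro ⟨h1, h2⟩; exact ⟨h1, lt_of_le_of_ne h2 h1⟩
  rw [e1, e2, Finset.prod_filter_mul_prod_filter_not]

/-! ### The integral as a finite sum over atoms -/

lemma integral_eq {Ω : Type} [MeasurableSpace Ω] (μ : Measure Ω) [IsProbabilityMeasure μ]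
    (σ : Ω → Fin n → Bool) (X : Ω → Fin n → Fin n → Bool)
    (hmeas : ∀ (ℓ : Fin n → Bool) (e : Fin n → Fin n → Bool),
      MeasurableSet {ω | σ ω = ℓ ∧ X ω = e})
    (hGood : μ {ω | (∀ i j, X ω i j = X ω j i) ∧ ∀ i, X ω i i = false} = 1)
    (F : (Fin n → Bool) → (Fin n → Fin n → Bool) → ℝ) :
    ∫ ω, F (σ ω) (X ω) ∂μ
      = ∑ ℓ : Fin n → Bool, ∑ e ∈ goodE n,
          (μ {ω | σ ω = ℓ ∧ X ω = e}).toReal * F ℓ e := by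
  classical
  have hpt : ∀ ω, F (σ ω) (X ω)
      = ∑ z : (Fin n → Bool) × (Fin n → Fin n → Bool),
          Set.indicator {ω' | σ ω' = z.1 ∧ X ω' = z.2} (fun _ => F z.1 z.2) ω := by
    intro ω
    rw [Finset.sum_eq_single (σ ω, X ω)]
    · rw [Set.indicator_of_mem (by exact ⟨rfl, rfl⟩)]
    · intro z _ hz
      rw [Set.indicator_of_notMem]
      intro hmem
      apply hz
      have h1 : z.1 = σ ω := hmem.1.symm
      have h2 : z.2 = X ω := hmem.2.symm
      exact Prod.ext h1 h2
    · intro h; exact absurd (mem_univ _) h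
  calc ∫ ω, F (σ ω) (X ω) ∂μ
      = ∫ ω, ∑ z : (Fin n → Bool) × (Fin n → Fin n → Bool),
          Set.indicator {ω' | σ ω' = z.1 ∧ X ω' = z.2} (fun _ => F z.1 z.2) ω ∂μ := by
        simp_rw [hpt]
    _ = ∑ z : (Fin n → Bool) × (Fin n → Fin n → Bool),
          ∫ ω, Set.indicator {ω' | σ ω' = z.1 ∧ X ω' = z.2} (fun _ => F z.1 z.2) ω ∂μ := by
        refine integral_finset_sum _ fun z _ => ?_
        exact (integrable_const _).indicator (hmeas z.1 z.2)
    _ = ∑ z : (Fin n → Bool) × (Fin n → Fin n → Bool),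
          (μ {ω | σ ω = z.1 ∧ X ω = z.2}).toReal * F z.1 z.2 := by
        refine Finset.sum_congr rfl fun z _ => ?_
        rw [integral_indicator_const _ (hmeas z.1 z.2)]
        rfl
    _ = ∑ ℓ : Fin n → Bool, ∑ e : Fin n → Fin n → Bool,
          (μ {ω | σ ω = ℓ ∧ X ω = e}).toReal * F ℓ e := by
        rw [Fintype.sum_prod_type]
    _ = ∑ ℓ : Fin n → Bool, ∑ e ∈ goodE n,
          (μ {ω | σ ω = ℓ ∧ X ω = e}).toReal * F ℓ e := by
        refine Finset.sum_congr rfl fun ℓ _ => ?_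
        refine (Finset.sum_subset (subset_univ _) fun e _ he => ?_).symm
        have hbadE : ¬ ((∀ i j, e i j = e j i) ∧ ∀ i, e i i = false) := by
          simpa [goodE] using he
        have hGmeas : MeasurableSet
            {ω | (∀ i j, X ω i j = X ω j i) ∧ ∀ i, X ω i i = false} := by
          have : {ω | (∀ i j, X ω i j = X ω j i) ∧ ∀ i, X ω i i = false}
              = ⋃ z ∈ {z : (Fin n → Bool) × (Fin n → Fin n → Bool) |
                    (∀ i j, z.2 i j = z.2 j i) ∧ ∀ i, z.2 i i = false},
                  {ω | σ ω = z.1 ∧ X ω = z.2} := by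
            ext ω
            simp only [Set.mem_setOf_eq, Set.mem_iUnion]
            constructor
            · intro h
              exact ⟨(σ ω, X ω), h, rfl, rfl⟩
            · rintro ⟨z, hz, h1, h2⟩
              rw [h2]; exact hz
          rw [this]
          exact MeasurableSet.biUnion (Set.to_countable _) fun z _ => hmeas z.1 z.2
        have hcompl : μ {ω | (∀ i j, X ω i j = X ω j i) ∧ ∀ i, X ω i i = false}ᶜ = 0 := by
          rw [measure_compl hGmeas (measure_ne_top _ _), hGood, measure_univ, tsub_self]
        have hsub : {ω | σ ω = ℓ ∧ X ω = e}
            ⊆ {ω | (∀ i j, X ω i j = X ω j i) ∧ ∀ i, X ω i i = false}ᶜ := by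
          intro ω hω
          simp only [Set.mem_setOf_eq] at hω
          simp only [Set.mem_compl_iff, Set.mem_setOf_eq, hω.2]
          exact hbadE
        rw [measure_mono_null hsub hcompl]
        simp

/-! ### Analytic bounds -/

def W (p q : ℝ) (ℓ : Fin n → Bool) (e : Fin n → Fin n → Bool) : ℝ :=
  ∏ i : Fin n, ∏ j : Fin n,
    (if i < j then
      (if e i j then (if ℓ i = ℓ j then p else q)
       else 1 - (if ℓ i = ℓ j then p else q)) else 1)

lemma W_eq (p q : ℝ) (ℓ : Fin n → Bool) (e : Fin n → Fin n → Bool) :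
    W p q ℓ e = ∏ i : Fin n, ∏ j : Fin n,
      (if i < j then (if e i j then rr p q ℓ i j else 1 - rr p q ℓ i j) else 1) := rfl

lemma W_nonneg {p q : ℝ} (hp0 : 0 ≤ p) (hq0 : 0 ≤ q) (hp1 : p ≤ 1) (hq1 : q ≤ 1)
    (ℓ : Fin n → Bool) (e : Fin n → Fin n → Bool) : 0 ≤ W p q ℓ e := by
  refine Finset.prod_nonneg fun i _ => Finset.prod_nonneg fun j _ => ?_
  split
  · split
    · split <;> assumption
    · split
      · linarith
      · linarith
  · norm_num

lemma prod_v_le (p q : ℝ) (hp0 : 0 ≤ p) (hq0 : 0 ≤ q) (hp1 : p ≤ 1) (hq1 : q ≤ 1)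
    (ℓ : Fin n → Bool) (i₀ : Fin n) (k s : ℕ) (hs : s ≤ k)
    (S : Finset (Fin n)) (hS : S ∈ Finset.powersetCard s (univ.erase i₀))
    (L : ℝ)
    (hmL : L ≤ ((univ.filter (fun j => ℓ i₀ = ℓ j)).card : ℝ))
    (hmL2 : L ≤ (n : ℝ) - ((univ.filter (fun j => ℓ i₀ = ℓ j)).card : ℝ)) :
    (∏ j ∈ univ.erase i₀, (if j ∈ S then rr p q ℓ i₀ j else 1 - rr p q ℓ i₀ j))
      ≤ (max p q) ^ s * Real.exp (-(p + q) * L + ((k : ℝ) + 1) * max p q) := by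
  classical
  obtain ⟨hSsub, hScard⟩ := Finset.mem_powersetCard.mp hS
  set m : ℕ := (univ.filter (fun j => ℓ i₀ = ℓ j)).card with hm
  have hrr0 : ∀ j, 0 ≤ rr p q ℓ i₀ j := fun j => by
    unfold rr; split <;> assumption
  have hrr1 : ∀ j, rr p q ℓ i₀ j ≤ 1 := fun j => by
    unfold rr; split <;> assumption
  have hrrm : ∀ j, rr p q ℓ i₀ j ≤ max p q := fun j => by
    unfold rr; split
    · exact le_max_left _ _
    · exact le_max_right _ _
  rw [← Finset.prod_sdiff hSsub]
  have h1 : (∏ j ∈ S, (if j ∈ S then rr p q ℓ i₀ j else 1 - rr p q ℓ i₀ j))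
      ≤ (max p q) ^ s := by
    rw [← hScard, ← Finset.prod_const]
    refine Finset.prod_le_prod (fun j hj => ?_) (fun j hj => ?_)
    · rw [if_pos hj]; exact hrr0 j
    · rw [if_pos hj]; exact hrrm j
  have h2 : (∏ j ∈ univ.erase i₀ \ S, (if j ∈ S then rr p q ℓ i₀ j else 1 - rr p q ℓ i₀ j))
      ≤ Real.exp (-(p + q) * L + ((k : ℝ) + 1) * max p q) := by
    have step1 : (∏ j ∈ univ.erase i₀ \ S, (if j ∈ S then rr p q ℓ i₀ j else 1 - rr p q ℓ i₀ j))
        ≤ ∏ j ∈ univ.erase i₀ \ S, Real.exp (-(rr p q ℓ i₀ j)) := by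
      refine Finset.prod_le_prod (fun j hj => ?_) (fun j hj => ?_)
      · rw [if_neg (Finset.mem_sdiff.mp hj).2]
        linarith [hrr1 j]
      · rw [if_neg (Finset.mem_sdiff.mp hj).2]
        have := Real.add_one_le_exp (-(rr p q ℓ i₀ j))
        linarith
    rw [← Real.exp_sum] at step1
    refine step1.trans (Real.exp_le_exp.mpr ?_)
    have hsum_univ : ∑ j : Fin n, rr p q ℓ i₀ j = (m : ℝ) * p + ((n : ℝ) - (m : ℝ)) * q := by
      unfold rr
      rw [Finset.sum_ite, Finset.sum_const, Finset.sum_const]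
      have hkey : m + (univ.filter (fun j => ¬ ℓ i₀ = ℓ j)).card = n := by
        have h := Finset.card_filter_add_card_filter_not
          (s := (univ : Finset (Fin n))) (p := fun j => ℓ i₀ = ℓ j)
        rwa [Finset.card_univ, Fintype.card_fin] at h
      have hcard2 : ((univ.filter (fun j => ¬ ℓ i₀ = ℓ j)).card : ℝ) = (n : ℝ) - (m : ℝ) := by
        have h2 := congrArg (Nat.cast (R := ℝ)) hkey
        push_cast at h2
        linarith
      simp only [nsmul_eq_mul]
      rw [hcard2, ← hm]
    have hsum_erase : ∑ j ∈ univ.erase i₀, rr p q ℓ i₀ j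
        = (m : ℝ) * p + ((n : ℝ) - (m : ℝ)) * q - p := by
      rw [Finset.sum_erase_eq_sub (mem_univ i₀), hsum_univ]
      have : rr p q ℓ i₀ i₀ = p := if_pos rfl
      rw [this]
    have hsum_S : ∑ j ∈ S, rr p q ℓ i₀ j ≤ (s : ℝ) * max p q := by
      calc ∑ j ∈ S, rr p q ℓ i₀ j ≤ ∑ j ∈ S, max p q :=
            Finset.sum_le_sum fun j _ => hrrm j
        _ = (s : ℝ) * max p q := by rw [Finset.sum_const, hScard, nsmul_eq_mul]
    have hsdiff : ∑ j ∈ univ.erase i₀ \ S, rr p q ℓ i₀ j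
        = (∑ j ∈ univ.erase i₀, rr p q ℓ i₀ j) - ∑ j ∈ S, rr p q ℓ i₀ j :=
      Finset.sum_sdiff_eq_sub hSsub
    have hpm : p ≤ max p q := le_max_left _ _
    have hkm : 0 ≤ max p q := le_trans hp0 hpm
    have hks : (s : ℝ) ≤ (k : ℝ) := Nat.cast_le.mpr hs
    have hmain : (p + q) * L ≤ (m : ℝ) * p + ((n : ℝ) - (m : ℝ)) * q := by
      have := mul_le_mul_of_nonneg_left hmL hp0
      have := mul_le_mul_of_nonneg_left hmL2 hq0
      nlinarith
    simp only [Finset.sum_neg_distrib]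
    rw [hsdiff, hsum_erase]
    nlinarith [hsum_S, mul_le_mul_of_nonneg_left hks hkm]
  have hnn : 0 ≤ ∏ j ∈ S, (if j ∈ S then rr p q ℓ i₀ j else 1 - rr p q ℓ i₀ j) := by
    refine Finset.prod_nonneg fun j hj => ?_
    rw [if_pos hj]; exact hrr0 j
  calc (∏ j ∈ univ.erase i₀ \ S, _) * (∏ j ∈ S, _)
      ≤ Real.exp (-(p + q) * L + ((k : ℝ) + 1) * max p q) * (max p q) ^ s := by
        exact mul_le_mul h2 h1 hnn (Real.exp_nonneg _)
    _ = (max p q) ^ s * Real.exp (-(p + q) * L + ((k : ℝ) + 1) * max p q) := mul_comm _ _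

lemma deg_indicator_le (e : Fin n → Fin n → Bool) (he : e ∈ goodE n) (i : Fin n) (k : ℕ) :
    (if (univ.filter (fun j => e i j = true)).card ≤ k then (1:ℝ) else 0)
      ≤ ∑ s ∈ Finset.range (k+1), ∑ S ∈ Finset.powersetCard s (univ.erase i),
          (if (∀ j, j ≠ i → (e i j = true ↔ j ∈ S)) then (1:ℝ) else 0) := by
  classical
  simp only [goodE, mem_filter, mem_univ, true_and] at he
  by_cases hdeg : (univ.filter (fun j => e i j = true)).card ≤ k
  · rw [if_pos hdeg]
    set S₀ : Finset (Fin n) := univ.filter (fun j => e i j = true) with hS₀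
    have hterm : (1:ℝ) ≤ ∑ S ∈ Finset.powersetCard S₀.card (univ.erase i),
        (if (∀ j, j ≠ i → (e i j = true ↔ j ∈ S)) then (1:ℝ) else 0) := by
      have hmem : S₀ ∈ Finset.powersetCard S₀.card (univ.erase i) := by
        rw [Finset.mem_powersetCard]
        refine ⟨fun j hj => ?_, rfl⟩
        rw [hS₀, mem_filter] at hj
        rw [mem_erase]
        refine ⟨fun hji => ?_, mem_univ _⟩
        rw [hji, he.2 i] at hj
        exact Bool.false_ne_true hj.2
      have h1 : (if (∀ j, j ≠ i → (e i j = true ↔ j ∈ S₀)) then (1:ℝ) else 0) = 1 := by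
        rw [if_pos]
        intro j _
        rw [hS₀, mem_filter]
        exact ⟨fun h => ⟨mem_univ _, h⟩, fun h => h.2⟩
      have h2 := Finset.single_le_sum (f := fun S =>
        (if (∀ j, j ≠ i → (e i j = true ↔ j ∈ S)) then (1:ℝ) else 0))
        (fun S _ => by split <;> norm_num) hmem
      rw [h1] at h2
      exact h2
    refine hterm.trans ?_
    exact Finset.single_le_sum (f := fun s => ∑ S ∈ Finset.powersetCard s (univ.erase i),
        (if (∀ j, j ≠ i → (e i j = true ↔ j ∈ S)) then (1:ℝ) else 0))
      (fun s _ => Finset.sum_nonneg fun S _ => by split <;> norm_num)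
      (Finset.mem_range.mpr (Nat.lt_succ_of_le hdeg))
  · rw [if_neg hdeg]
    exact Finset.sum_nonneg fun s _ => Finset.sum_nonneg fun S _ => by split <;> norm_num

lemma sum_e_bound (p q : ℝ) (hp0 : 0 ≤ p) (hq0 : 0 ≤ q) (hp1 : p ≤ 1) (hq1 : q ≤ 1)
    (h1 : 1 ≤ (n : ℝ) * max p q) (ℓ : Fin n → Bool) (i₀ : Fin n) (k : ℕ) (L : ℝ)
    (hmL : L ≤ ((univ.filter (fun j => ℓ i₀ = ℓ j)).card : ℝ))
    (hmL2 : L ≤ (n : ℝ) - ((univ.filter (fun j => ℓ i₀ = ℓ j)).card : ℝ)) :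
    ∑ e ∈ goodE n, (if (univ.filter (fun j => e i₀ j = true)).card ≤ k then (1:ℝ) else 0)
        * W p q ℓ e
      ≤ ((k:ℝ)+1) * ((n : ℝ) * max p q)^k
          * Real.exp (-(p + q) * L + ((k : ℝ) + 1) * max p q) := by
  classical
  set D := Real.exp (-(p + q) * L + ((k : ℝ) + 1) * max p q) with hD
  have hD0 : 0 ≤ D := Real.exp_nonneg _
  have hpm0 : 0 ≤ max p q := le_trans hp0 (le_max_left _ _)
  have step1 : ∑ e ∈ goodE n, (if (univ.filter (fun j => e i₀ j = true)).card ≤ k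
        then (1:ℝ) else 0) * W p q ℓ e
      ≤ ∑ e ∈ goodE n, (∑ s ∈ Finset.range (k+1), ∑ S ∈ Finset.powersetCard s (univ.erase i₀),
          (if (∀ j, j ≠ i₀ → (e i₀ j = true ↔ j ∈ S)) then (1:ℝ) else 0)) * W p q ℓ e := by
    refine Finset.sum_le_sum fun e he => ?_
    exact mul_le_mul_of_nonneg_right (deg_indicator_le e he i₀ k)
      (W_nonneg hp0 hq0 hp1 hq1 ℓ e)
  refine step1.trans ?_
  have step2 : ∑ e ∈ goodE n, (∑ s ∈ Finset.range (k+1),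
        ∑ S ∈ Finset.powersetCard s (univ.erase i₀),
          (if (∀ j, j ≠ i₀ → (e i₀ j = true ↔ j ∈ S)) then (1:ℝ) else 0)) * W p q ℓ e
      = ∑ s ∈ Finset.range (k+1), ∑ S ∈ Finset.powersetCard s (univ.erase i₀),
          ∑ e ∈ goodE n,
            (if (∀ j, j ≠ i₀ → (e i₀ j = true ↔ j ∈ S)) then (1:ℝ) else 0) * W p q ℓ e := by
    simp_rw [Finset.sum_mul]
    rw [Finset.sum_comm]
    exact Finset.sum_congr rfl fun s _ => Finset.sum_comm
  rw [step2]
  have step3 : ∀ s ∈ Finset.range (k+1), ∀ S ∈ Finset.powersetCard s (univ.erase i₀),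
      ∑ e ∈ goodE n,
        (if (∀ j, j ≠ i₀ → (e i₀ j = true ↔ j ∈ S)) then (1:ℝ) else 0) * W p q ℓ e
      ≤ (max p q) ^ s * D := by
    intro s hs S hS
    simp_rw [W_eq]
    rw [lemmaM p q ℓ i₀ S]
    exact prod_v_le p q hp0 hq0 hp1 hq1 ℓ i₀ k s
      (Nat.lt_succ_iff.mp (Finset.mem_range.mp hs)) S hS L hmL hmL2
  calc ∑ s ∈ Finset.range (k+1), ∑ S ∈ Finset.powersetCard s (univ.erase i₀),
          ∑ e ∈ goodE n,
            (if (∀ j, j ≠ i₀ → (e i₀ j = true ↔ j ∈ S)) then (1:ℝ) else 0) * W p q ℓ e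
      ≤ ∑ s ∈ Finset.range (k+1), ∑ S ∈ Finset.powersetCard s (univ.erase i₀),
          (max p q) ^ s * D := by
        exact Finset.sum_le_sum fun s hs => Finset.sum_le_sum fun S hS => step3 s hs S hS
    _ = ∑ s ∈ Finset.range (k+1),
          ((Finset.powersetCard s (univ.erase i₀)).card : ℝ) * ((max p q) ^ s * D) := by
        simp [Finset.sum_const, nsmul_eq_mul]
    _ ≤ ∑ s ∈ Finset.range (k+1), ((n : ℝ) * max p q)^k * D := by
        refine Finset.sum_le_sum fun s hs => ?_
        have hcard : ((Finset.powersetCard s (univ.erase i₀)).card : ℝ) ≤ (n : ℝ) ^ s := by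
          rw [Finset.card_powersetCard, Finset.card_erase_of_mem (mem_univ _), Finset.card_univ,
            Fintype.card_fin]
          calc (((n-1).choose s : ℕ) : ℝ) ≤ (((n-1)^s : ℕ) : ℝ) := by
                exact_mod_cast Nat.choose_le_pow (n-1) s
            _ ≤ (n : ℝ) ^ s := by
                have : ((n-1 : ℕ) : ℝ) ≤ (n : ℝ) := by
                  exact_mod_cast Nat.sub_le n 1
                push_cast
                exact pow_le_pow_left₀ (by positivity) this s
        calc ((Finset.powersetCard s (univ.erase i₀)).card : ℝ) * ((max p q) ^ s * D)
            ≤ (n : ℝ)^s * ((max p q) ^ s * D) := by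
              refine mul_le_mul_of_nonneg_right hcard (by positivity)
          _ = ((n : ℝ) * max p q)^s * D := by rw [mul_pow]; ring
          _ ≤ ((n : ℝ) * max p q)^k * D := by
              refine mul_le_mul_of_nonneg_right ?_ hD0
              exact pow_le_pow_right₀ h1 (Nat.lt_succ_iff.mp (Finset.mem_range.mp hs))
    _ = ((k:ℝ)+1) * (((n : ℝ) * max p q)^k * D) := by
        rw [Finset.sum_const, Finset.card_range, nsmul_eq_mul]
        push_cast
        ring
    _ = ((k:ℝ)+1) * ((n : ℝ) * max p q)^k * D := by ring

/-! ### The balance event -/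

def BalP (n : ℕ) (ℓ : Fin n → Bool) : Prop :=
  ((n : ℝ) / 2 - (n : ℝ) ^ ((3 : ℝ) / 4) ≤ (Set.ncard {i : Fin n | ℓ i = true} : ℝ) ∧
    (Set.ncard {i : Fin n | ℓ i = true} : ℝ) ≤ (n : ℝ) / 2 + (n : ℝ) ^ ((3 : ℝ) / 4)) ∧
  ((n : ℝ) / 2 - (n : ℝ) ^ ((3 : ℝ) / 4) ≤ (Set.ncard {i : Fin n | ℓ i = false} : ℝ) ∧
    (Set.ncard {i : Fin n | ℓ i = false} : ℝ) ≤ (n : ℝ) / 2 + (n : ℝ) ^ ((3 : ℝ) / 4))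

lemma mem_balanced_iff {Ω : Type} (σf : Ω → Fin n → Bool) (ω : Ω) :
    ω ∈ balanced n σf ↔ BalP n (σf ω) := Iff.rfl

lemma ncard_setOf (P : Fin n → Prop) [DecidablePred P] :
    (Set.ncard {i | P i}) = (univ.filter P).card := by
  rw [Set.ncard_eq_toFinset_card', Set.toFinset_setOf]

lemma bal_count {ℓ : Fin n → Bool} (hb : BalP n ℓ) (i₀ : Fin n) :
    (n : ℝ) / 2 - (n : ℝ) ^ ((3 : ℝ) / 4)
        ≤ ((univ.filter (fun j => ℓ i₀ = ℓ j)).card : ℝ) ∧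
    (n : ℝ) / 2 - (n : ℝ) ^ ((3 : ℝ) / 4)
        ≤ (n : ℝ) - ((univ.filter (fun j => ℓ i₀ = ℓ j)).card : ℝ) := by
  classical
  have hct : (Set.ncard {i : Fin n | ℓ i = true} : ℝ)
      = ((univ.filter (fun i => ℓ i = true)).card : ℝ) := by
    rw [ncard_setOf]
  have hcf : (Set.ncard {i : Fin n | ℓ i = false} : ℝ)
      = ((univ.filter (fun i => ℓ i = false)).card : ℝ) := by
    rw [ncard_setOf]
  have hsum : (univ.filter (fun i => ℓ i = true)).card
      + (univ.filter (fun i => ℓ i = false)).card = n := by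
    have h := Finset.card_filter_add_card_filter_not
      (s := (univ : Finset (Fin n))) (p := fun i => ℓ i = true)
    rw [Finset.card_univ, Fintype.card_fin] at h
    have hfilt : (univ.filter (fun a => ¬ ℓ a = true)) = (univ.filter (fun i => ℓ i = false)) := by
      apply Finset.filter_congr
      intro i _
      simp [Bool.not_eq_true]
    rw [hfilt] at h
    exact h
  have hsumR : ((univ.filter (fun i => ℓ i = true)).card : ℝ)
      + ((univ.filter (fun i => ℓ i = false)).card : ℝ) = (n : ℝ) := by
    exact_mod_cast congrArg (Nat.cast (R := ℝ)) hsum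
  cases hbi : ℓ i₀ with
  | true =>
      have hfeq : univ.filter (fun j => (true : Bool) = ℓ j) = univ.filter (fun j => ℓ j = true) := by
        apply Finset.filter_congr
        intro j _
        exact eq_comm
      rw [hfeq]
      constructor
      · rw [← hct]; exact hb.1.1
      · have h2 := hb.2.1
        rw [hcf] at h2
        linarith [hsumR]
  | false =>
      have hfeq : univ.filter (fun j => (false : Bool) = ℓ j) = univ.filter (fun j => ℓ j = false) := by
        apply Finset.filter_congr
        intro j _
        exact eq_comm
      rw [hfeq]
      constructor
      · rw [← hcf]; exact hb.2.1
      · have h2 := hb.1.1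
        rw [hct] at h2
        linarith [hsumR]

end S12

/-- in `SBM(n, α log n/n, β log n/n)`, the expected number of vertices of
degree at most `k`, restricted to the balance event `H`, is at most
`2(k+1)²(γ log n/2)^k n^{1−(α+β)/2+o(1)}` with `γ = max{α,β}`: for every `δ > 0`,
eventually `E[|U|·1(H)] ≤ 2(k+1)²(γ log n/2)^k n^{1−(α+β)/2+δ}`. -/
theorem statement12 (α β : ℝ) (hα : 0 < α) (hβ : 0 < β) (k : ℕ) (δ : ℝ) (hδ : 0 < δ)
    (Ω : ℕ → Type) [∀ n, MeasurableSpace (Ω n)]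
    (ℙ : ∀ n, Measure (Ω n)) (hP : ∀ n, IsProbabilityMeasure (ℙ n))
    (σ : ∀ n, Ω n → Fin n → Bool) (X : ∀ n, Ω n → Fin n → Fin n → Bool)
    (hmeas : ∀ (n : ℕ) (ℓ : Fin n → Bool) (e : Fin n → Fin n → Bool),
      MeasurableSet {ω | σ n ω = ℓ ∧ X n ω = e})
    (hsbm : ∀ n, sbmLaw (ℙ n) n (α * Real.log n / n) (β * Real.log n / n) (σ n) (X n)) :
    ∀ᶠ n : ℕ in Filter.atTop,
      (∫ ω, (Set.ncard {i : Fin n |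
            (Finset.univ.filter (fun j => X n ω i j = true)).card ≤ k} : ℝ)
          * Set.indicator (balanced n (σ n)) (fun _ => (1 : ℝ)) ω ∂(ℙ n))
        ≤ 2 * ((k : ℝ) + 1) ^ 2 * (max α β * Real.log n / 2) ^ k
            * (n : ℝ) ^ (1 - (α + β) / 2 + δ) := by
  classical
  have hγ : 0 < max α β := lt_of_lt_of_le hα (le_max_left _ _)
  have tlog : Filter.Tendsto (fun m : ℕ => Real.log m) Filter.atTop Filter.atTop :=
    Real.tendsto_log_atTop.comp tendsto_natCast_atTop_atTop
  have evA : ∀ᶠ n : ℕ in Filter.atTop, 2 ≤ n := Filter.eventually_ge_atTop 2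
  have evB : ∀ᶠ n : ℕ in Filter.atTop, 1 ≤ max α β * Real.log n :=
    (Filter.Tendsto.const_mul_atTop hγ tlog).eventually_ge_atTop 1
  have tC : Filter.Tendsto (fun m : ℕ => max α β * (Real.log m / m)) Filter.atTop (nhds 0) := by
    have t0 := Real.isLittleO_log_id_atTop.tendsto_div_nhds_zero
    have := (t0.comp tendsto_natCast_atTop_atTop).const_mul (max α β)
    simpa using this
  have evC : ∀ᶠ n : ℕ in Filter.atTop, max α β * Real.log n / n ≤ 1 := by
    filter_upwards [tC.eventually (eventually_le_nhds (by norm_num : (0:ℝ) < 1))] with m hm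
    rw [mul_div_assoc]
    exact hm
  have tD1 : Filter.Tendsto (fun m : ℕ => (α+β) * Real.log m * (m:ℝ)^(-(1:ℝ)/4))
      Filter.atTop (nhds 0) := by
    have t2 := (isLittleO_log_rpow_atTop (by norm_num : (0:ℝ) < 1/4)).tendsto_div_nhds_zero
    have base := (t2.comp tendsto_natCast_atTop_atTop).const_mul (α+β)
    rw [mul_zero] at base
    refine Filter.Tendsto.congr' ?_ base
    filter_upwards [Filter.eventually_ge_atTop 1] with m hm
    have hm0 : (0:ℝ) ≤ (m:ℝ) := Nat.cast_nonneg m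
    simp only [Function.comp]
    rw [show -(1:ℝ)/4 = -((1:ℝ)/4) by norm_num, Real.rpow_neg hm0, div_eq_mul_inv, ← mul_assoc]
  have tD2 : Filter.Tendsto (fun m : ℕ => ((k:ℝ)+1) * (max α β * (Real.log m / m)))
      Filter.atTop (nhds 0) := by
    have := tC.const_mul ((k:ℝ)+1)
    simpa using this
  have evD : ∀ᶠ n : ℕ in Filter.atTop,
      (α+β) * Real.log n * (n:ℝ)^(-(1:ℝ)/4) + ((k:ℝ)+1) * (max α β * Real.log n / n) ≤ 1 := by
    have tsum := tD1.add tD2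
    rw [add_zero] at tsum
    filter_upwards [tsum.eventually (eventually_le_nhds (by norm_num : (0:ℝ) < 1))] with m hm
    rw [mul_div_assoc]
    exact hm
  have evE : ∀ᶠ n : ℕ in Filter.atTop,
      Real.exp 1 ≤ 2 * ((k:ℝ)+1) * (1/2:ℝ)^k * (n:ℝ)^δ := by
    have t4 : Filter.Tendsto (fun m : ℕ => 2*((k:ℝ)+1)*(1/2:ℝ)^k * (m:ℝ)^δ)
        Filter.atTop Filter.atTop :=
      Filter.Tendsto.const_mul_atTop (by positivity)
        ((tendsto_rpow_atTop hδ).comp tendsto_natCast_atTop_atTop)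
    exact t4.eventually_ge_atTop _
  filter_upwards [evA, evB, evC, evD, evE] with n h2n hB hC hD hE
  haveI := hP n
  have hn1 : (1:ℝ) < (n:ℝ) := by exact_mod_cast h2n
  have hn0 : (0:ℝ) < (n:ℝ) := lt_trans one_pos hn1
  have hlog0 : 0 < Real.log n := Real.log_pos hn1
  have hp0 : 0 ≤ α * Real.log n / n := by positivity
  have hq0 : 0 ≤ β * Real.log n / n := by positivity
  have hpmax : max (α * Real.log n / n) (β * Real.log n / n) = max α β * Real.log n / n := by
    rw [mul_div_assoc, mul_div_assoc, mul_div_assoc]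
    exact (max_mul_of_nonneg α β (by positivity)).symm
  have hple : α * Real.log n / n ≤ max α β * Real.log n / n := by
    gcongr
    exact le_max_left _ _
  have hqle : β * Real.log n / n ≤ max α β * Real.log n / n := by
    gcongr
    exact le_max_right _ _
  have hp1 : α * Real.log n / n ≤ 1 := hple.trans hC
  have hq1 : β * Real.log n / n ≤ 1 := hqle.trans hC
  have hnm : (n:ℝ) * (max α β * Real.log n / n) = max α β * Real.log n := by
    field_simp
  have h1pm : 1 ≤ (n:ℝ) * max (α * Real.log n / n) (β * Real.log n / n) := by
    rw [hpmax, hnm]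
    exact hB
  -- set up F
  set F : (Fin n → Bool) → (Fin n → Fin n → Bool) → ℝ := fun ℓ e =>
    (Set.ncard {i : Fin n | (Finset.univ.filter (fun j => e i j = true)).card ≤ k} : ℝ) *
      (if S12.BalP n ℓ then 1 else 0) with hF
  have hint : (∫ ω, (Set.ncard {i : Fin n |
            (Finset.univ.filter (fun j => X n ω i j = true)).card ≤ k} : ℝ)
          * Set.indicator (balanced n (σ n)) (fun _ => (1 : ℝ)) ω ∂(ℙ n))
      = ∫ ω, F (σ n ω) (X n ω) ∂(ℙ n) := by
    refine integral_congr_ae (Filter.EventuallyEq.of_eq (funext fun ω => ?_))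
    simp only [hF]
    by_cases hb : S12.BalP n (σ n ω)
    · rw [Set.indicator_of_mem ((S12.mem_balanced_iff (σ n) ω).mpr hb), if_pos hb]
    · rw [Set.indicator_of_notMem (fun hmem =>
        hb ((S12.mem_balanced_iff (σ n) ω).mp hmem)), if_neg hb]
  rw [hint, S12.integral_eq (ℙ n) (σ n) (X n) (hmeas n) (hsbm n).1 F]
  have hsum_eq : ∑ ℓ : Fin n → Bool, ∑ e ∈ S12.goodE n,
        ((ℙ n) {ω | σ n ω = ℓ ∧ X n ω = e}).toReal * F ℓ e
      = ∑ ℓ : Fin n → Bool, ∑ e ∈ S12.goodE n,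
          ((1/2:ℝ)^n * S12.W (α * Real.log n / n) (β * Real.log n / n) ℓ e) * F ℓ e := by
    refine Finset.sum_congr rfl fun ℓ _ => Finset.sum_congr rfl fun e he => ?_
    have hegood : (∀ i j, e i j = e j i) ∧ ∀ i, e i i = false := by
      simpa [S12.goodE] using he
    rw [(hsbm n).2 ℓ e hegood.1 hegood.2]
    rfl
  rw [hsum_eq]
  -- the per-label bound
  set L : ℝ := (n:ℝ)/2 - (n:ℝ)^((3:ℝ)/4) with hLdef
  set Bnd : ℝ := ((k:ℝ)+1) * ((n:ℝ) * max (α * Real.log n / n) (β * Real.log n / n))^k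
      * Real.exp (-((α * Real.log n / n) + (β * Real.log n / n)) * L
          + ((k:ℝ)+1) * max (α * Real.log n / n) (β * Real.log n / n)) with hBnddef
  have hBnd0 : 0 ≤ Bnd := by
    rw [hBnddef]
    have h0 : (0:ℝ) ≤ (n:ℝ) * max (α * Real.log n / n) (β * Real.log n / n) :=
      le_trans zero_le_one h1pm
    positivity
  have perℓ : ∀ ℓ : Fin n → Bool,
      ∑ e ∈ S12.goodE n, ((1/2:ℝ)^n * S12.W (α * Real.log n / n) (β * Real.log n / n) ℓ e)
          * F ℓ e
        ≤ (1/2:ℝ)^n * ((n:ℝ) * Bnd) := by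
    intro ℓ
    by_cases hb : S12.BalP n ℓ
    · have hFe : ∀ e : Fin n → Fin n → Bool, F ℓ e
          = ∑ i : Fin n, (if (univ.filter (fun j => e i j = true)).card ≤ k
              then (1:ℝ) else 0) := by
        intro e
        rw [hF]
        simp only [if_pos hb, mul_one]
        rw [S12.ncard_setOf, Finset.card_filter]
        push_cast
        rfl
      calc ∑ e ∈ S12.goodE n,
              ((1/2:ℝ)^n * S12.W (α * Real.log n / n) (β * Real.log n / n) ℓ e) * F ℓ e
          = ∑ e ∈ S12.goodE n, ∑ i : Fin n, (1/2:ℝ)^n *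
              ((if (univ.filter (fun j => e i j = true)).card ≤ k then (1:ℝ) else 0)
                * S12.W (α * Real.log n / n) (β * Real.log n / n) ℓ e) := by
            refine Finset.sum_congr rfl fun e _ => ?_
            rw [hFe, Finset.mul_sum]
            refine Finset.sum_congr rfl fun i _ => ?_
            ring
        _ = ∑ i : Fin n, ∑ e ∈ S12.goodE n, (1/2:ℝ)^n *
              ((if (univ.filter (fun j => e i j = true)).card ≤ k then (1:ℝ) else 0)
                * S12.W (α * Real.log n / n) (β * Real.log n / n) ℓ e) := Finset.sum_comm
        _ ≤ ∑ i : Fin n, (1/2:ℝ)^n * Bnd := by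
            refine Finset.sum_le_sum fun i _ => ?_
            rw [← Finset.mul_sum]
            refine mul_le_mul_of_nonneg_left ?_ (by positivity)
            rw [hBnddef]
            exact S12.sum_e_bound (α * Real.log n / n) (β * Real.log n / n)
              hp0 hq0 hp1 hq1 h1pm ℓ i k L (S12.bal_count hb i).1 (S12.bal_count hb i).2
        _ = (1/2:ℝ)^n * ((n:ℝ) * Bnd) := by
            rw [Finset.sum_const, Finset.card_univ, Fintype.card_fin, nsmul_eq_mul]
            ring
    · have hz : ∀ e ∈ S12.goodE n,
          ((1/2:ℝ)^n * S12.W (α * Real.log n / n) (β * Real.log n / n) ℓ e) * F ℓ e = 0 := by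
        intro e _
        rw [hF]
        simp [if_neg hb]
      rw [Finset.sum_eq_zero hz]
      positivity
  calc ∑ ℓ : Fin n → Bool, ∑ e ∈ S12.goodE n,
          ((1/2:ℝ)^n * S12.W (α * Real.log n / n) (β * Real.log n / n) ℓ e) * F ℓ e
      ≤ ∑ _ℓ : Fin n → Bool, (1/2:ℝ)^n * ((n:ℝ) * Bnd) :=
        Finset.sum_le_sum fun ℓ _ => perℓ ℓ
    _ = (2:ℝ)^n * ((1/2:ℝ)^n * ((n:ℝ) * Bnd)) := by
        rw [Finset.sum_const, Finset.card_univ, Fintype.card_fun, Fintype.card_bool,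
          Fintype.card_fin, nsmul_eq_mul]
        push_cast
        ring
    _ = (n:ℝ) * Bnd := by
        rw [← mul_assoc, ← mul_pow]
        norm_num
    _ ≤ 2 * ((k : ℝ) + 1) ^ 2 * (max α β * Real.log n / 2) ^ k
            * (n : ℝ) ^ (1 - (α + β) / 2 + δ) := by
        rw [hBnddef, hpmax, hnm, hLdef]
        have h34 : (n:ℝ)^((3:ℝ)/4) = (n:ℝ)^(-(1:ℝ)/4) * (n:ℝ) := by
          have h : (n:ℝ)^(-(1:ℝ)/4) * (n:ℝ)^(1:ℝ) = (n:ℝ)^(-(1:ℝ)/4 + 1) :=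
            (Real.rpow_add hn0 _ _).symm
          rw [Real.rpow_one] at h
          rw [h]
          norm_num
        have hexp : -((α * Real.log n / n) + (β * Real.log n / n))
              * ((n:ℝ)/2 - (n:ℝ)^((3:ℝ)/4)) + ((k:ℝ)+1) * (max α β * Real.log n / n)
            = Real.log n * (-((α+β)/2))
              + ((α+β) * Real.log n * (n:ℝ)^(-(1:ℝ)/4)
                + ((k:ℝ)+1) * (max α β * Real.log n / n)) := by
          rw [h34]
          field_simp
          ring
        rw [hexp, Real.exp_add, ← Real.rpow_def_of_pos hn0]
        have hEbound : Real.exp ((α+β) * Real.log n * (n:ℝ)^(-(1:ℝ)/4)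
              + ((k:ℝ)+1) * (max α β * Real.log n / n))
            ≤ 2 * ((k:ℝ)+1) * (1/2:ℝ)^k * (n:ℝ)^δ :=
          le_trans (Real.exp_le_exp.mpr hD) hE
        have hrhs : (n:ℝ)^(1 - (α+β)/2 + δ)
            = (n:ℝ) * ((n:ℝ)^(-((α+β)/2)) * (n:ℝ)^δ) := by
          rw [show (1 - (α+β)/2 + δ) = 1 + (-((α+β)/2) + δ) by ring,
            Real.rpow_add hn0, Real.rpow_add hn0, Real.rpow_one]
        have hhalf : (max α β * Real.log n / 2)^k
            = (max α β * Real.log n)^k * (1/2:ℝ)^k := by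
          rw [div_pow, div_pow]
          ring
        rw [hrhs, hhalf]
        have hA0 : (0:ℝ) ≤ ((k:ℝ)+1) * (max α β * Real.log n)^k
            * ((n:ℝ) * (n:ℝ)^(-((α+β)/2))) := by positivity
        calc (n:ℝ) * (((k:ℝ)+1) * (max α β * Real.log n)^k
                * ((n:ℝ)^(-((α+β)/2))
                  * Real.exp ((α+β) * Real.log n * (n:ℝ)^(-(1:ℝ)/4)
                    + ((k:ℝ)+1) * (max α β * Real.log n / n))))
            = (((k:ℝ)+1) * (max α β * Real.log n)^k * ((n:ℝ) * (n:ℝ)^(-((α+β)/2))))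
                * Real.exp ((α+β) * Real.log n * (n:ℝ)^(-(1:ℝ)/4)
                  + ((k:ℝ)+1) * (max α β * Real.log n / n)) := by ring
          _ ≤ (((k:ℝ)+1) * (max α β * Real.log n)^k * ((n:ℝ) * (n:ℝ)^(-((α+β)/2))))
                * (2 * ((k:ℝ)+1) * (1/2:ℝ)^k * (n:ℝ)^δ) :=
              mul_le_mul_of_nonneg_left hEbound hA0
          _ = 2 * ((k : ℝ) + 1) ^ 2 * ((max α β * Real.log n)^k * (1/2:ℝ)^k)
                * ((n:ℝ) * ((n:ℝ)^(-((α+β)/2)) * (n:ℝ)^δ)) := by ring
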